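/- The cycloid is a translating soliton of inverse mean curvature flow: define x, y : ℝ → ℝ by x(θ) = (1 − cos 2θ)/4 and y(θ) = (2θ − sin 2θ)/4. Then for every θ ∈ ℝ: x′(θ) = sin θ · cos θ, y′(θ) = sin²θ, and the identity (x′(θ)·y″(θ) − y′(θ)·x″(θ)) · y′(θ) = (x′(θ)² + y′(θ)²)² holds. For θ ∈ (0, π), this identity expresses that the signed curvature κ = (x′y″ − y′x″)/(x′² + y′²)^{3/2} and the normal component ⟨ν, e₁⟩ = y′/(x′² + y′²)^{1/2} satisfy 1/κ = ⟨ν, e₁⟩. -/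

import Mathlib

open Real

lemma hdX (θ : ℝ) : HasDerivAt (fun t : ℝ => (1 - Real.cos (2 * t)) / 4)
    (Real.sin θ * Real.cos θ) θ := by
  have h2 : HasDerivAt (fun t : ℝ => 2 * t) 2 θ := by
    simpa using (hasDerivAt_id θ).const_mul 2
  have hc : HasDerivAt (fun t : ℝ => Real.cos (2 * t)) (-Real.sin (2 * θ) * 2) θ :=
    (Real.hasDerivAt_cos (2 * θ)).comp θ h2
  have := ((hc.const_sub 1).div_const 4)
  refine this.congr_deriv ?_
  rw [Real.sin_two_mul]; ring

lemma hdY (θ : ℝ) : HasDerivAt (fun t : ℝ => (2 * t - Real.sin (2 * t)) / 4)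
    (Real.sin θ ^ 2) θ := by
  have h2 : HasDerivAt (fun t : ℝ => 2 * t) 2 θ := by
    simpa using (hasDerivAt_id θ).const_mul 2
  have hs : HasDerivAt (fun t : ℝ => Real.sin (2 * t)) (Real.cos (2 * θ) * 2) θ :=
    (Real.hasDerivAt_sin (2 * θ)).comp θ h2
  have := ((h2.sub hs).div_const 4)
  refine this.congr_deriv ?_
  rw [Real.cos_two_mul]
  have := Real.sin_sq_add_cos_sq θ
  nlinarith [Real.sin_sq_add_cos_sq θ]

lemma hdX2 (θ : ℝ) : HasDerivAt (fun t : ℝ => Real.sin t * Real.cos t)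
    (Real.cos (2 * θ)) θ := by
  have := (Real.hasDerivAt_sin θ).mul (Real.hasDerivAt_cos θ)
  refine this.congr_deriv ?_
  rw [Real.cos_two_mul]
  nlinarith [Real.sin_sq_add_cos_sq θ]

lemma hdY2 (θ : ℝ) : HasDerivAt (fun t : ℝ => Real.sin t ^ 2)
    (Real.sin (2 * θ)) θ := by
  have := (Real.hasDerivAt_sin θ).pow 2
  refine this.congr_deriv ?_
  rw [Real.sin_two_mul]; ring

theorem cycloid_translating_soliton
    (x y : ℝ → ℝ)
    (hx : ∀ θ, x θ = (1 - Real.cos (2 * θ)) / 4)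
    (hy : ∀ θ, y θ = (2 * θ - Real.sin (2 * θ)) / 4) :
    ∀ θ : ℝ,
      deriv x θ = Real.sin θ * Real.cos θ ∧
      deriv y θ = Real.sin θ ^ 2 ∧
      (deriv x θ * deriv (deriv y) θ - deriv y θ * deriv (deriv x) θ) * deriv y θ
        = (deriv x θ ^ 2 + deriv y θ ^ 2) ^ 2 := by
  have hxf : x = fun t => (1 - Real.cos (2 * t)) / 4 := funext hx
  have hyf : y = fun t => (2 * t - Real.sin (2 * t)) / 4 := funext hy
  subst hxf hyf
  have hdx : deriv (fun t : ℝ => (1 - Real.cos (2 * t)) / 4)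
      = fun t => Real.sin t * Real.cos t := funext fun t => (hdX t).deriv
  have hdy : deriv (fun t : ℝ => (2 * t - Real.sin (2 * t)) / 4)
      = fun t => Real.sin t ^ 2 := funext fun t => (hdY t).deriv
  intro θ
  rw [hdx, hdy]
  refine ⟨rfl, rfl, ?_⟩
  rw [(hdX2 θ).deriv, (hdY2 θ).deriv, Real.sin_two_mul, Real.cos_two_mul]
  simp only []
  linear_combination (-(Real.sin θ ^ 4) * (Real.sin θ ^ 2 + Real.cos θ ^ 2 + 1)) *
    (Real.sin_sq_add_cos_sq θ)
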